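/- Let α ∈ (0,1/2) and L, M > 0, and let h, σ : [0,1] → ℝ be measurable with |h| ≤ L and |σ| ≤ M. Set C_α = ∫_0^1 (y^{−α} − 1)(1−y)^{−(α+1)} dy, which is finite. For 0 < v < s ≤ 1 define g(s,v) = s^α h(s) v^{−α} ( ∫_0^s ( r^{−α} − s^{−α} ) (s−r)^{−(α+1)} dr ) ∫_v^s ∫_v^u (x−v)^{α−1} x^α σ(x) dx du. Then |g(s,v)| ≤ (L M C_α / (α(α+1))) v^{−α} (s−v)^{α+1} for all 0 < v < s ≤ 1. In particular, for every fixed s ∈ (0,1], g(s,v) → 0 as v → s⁻. -/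

import Mathlib

open MeasureTheory Set intervalIntegral Filter Topology

/-- The constant `C_α = ∫_0^1 (y^{-α} - 1)(1-y)^{-(α+1)} dy`. -/
noncomputable def Cα (α : ℝ) : ℝ :=
  ∫ y in (0:ℝ)..1, (y ^ (-α) - 1) * (1 - y) ^ (-(α + 1))

/-- The kernel from the regular-case Onsager–Machlup computation involving
the singular factor `∫_0^s (r^{-α} - s^{-α})(s-r)^{-(α+1)} dr`. -/
noncomputable def gKer (α : ℝ) (h σ : ℝ → ℝ) (s v : ℝ) : ℝ :=
  s ^ α * h s * v ^ (-α) *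
    (∫ r in (0:ℝ)..s, (r ^ (-α) - s ^ (-α)) * (s - r) ^ (-(α + 1))) *
    ∫ u in v..s, ∫ x in v..u, (x - v) ^ (α - 1) * x ^ α * σ x


lemma shiftRpowIntegrable {r : ℝ} (hr : -1 < r) (v a b : ℝ) :
    IntervalIntegrable (fun x : ℝ => (x - v) ^ r) volume a b := by
  simpa using (intervalIntegrable_rpow' (a := a - v) (b := b - v) hr).comp_sub_right v

lemma shiftRpowIntegral {r : ℝ} (hr : -1 < r) (v a b : ℝ) :
    ∫ x in a..b, (x - v) ^ r = ((b - v) ^ (r + 1) - (a - v) ^ (r + 1)) / (r + 1) := by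
  rw [intervalIntegral.integral_comp_sub_right (fun x => x ^ r) v,
    integral_rpow (Or.inl hr)]


lemma CaIntegrable {α : ℝ} (hα0 : 0 < α) (hα1 : α < 1) :
    IntervalIntegrable (fun y : ℝ => (y ^ (-α) - 1) * (1 - y) ^ (-(α + 1)))
      volume 0 1 := by
  have hmeas : Measurable fun y : ℝ => (y ^ (-α) - 1) * (1 - y) ^ (-(α + 1)) := by
    fun_prop
  have h1 : IntervalIntegrable (fun y : ℝ => (y ^ (-α) - 1) * (1 - y) ^ (-(α + 1)))
      volume 0 (1/2) := by
    apply IntervalIntegrable.mono_fun'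
      (g := fun y : ℝ => (2:ℝ) ^ (α+1) * y ^ (-α))
    · exact (intervalIntegrable_rpow' (by linarith)).const_mul _
    · exact hmeas.aestronglyMeasurable
    · rw [uIoc_of_le (by norm_num : (0:ℝ) ≤ 1/2)]
      filter_upwards [ae_restrict_mem measurableSet_Ioc] with y hy
      obtain ⟨hy0, hy2⟩ := hy
      have hy1 : y ≤ 1 := by linarith
      have ha : (0:ℝ) ≤ y ^ (-α) - 1 := by
        have := Real.one_le_rpow_of_pos_of_le_one_of_nonpos hy0 hy1 (by linarith : -α ≤ 0)
        linarith
      have hb : (0:ℝ) ≤ (1 - y) ^ (-(α + 1)) := Real.rpow_nonneg (by linarith) _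
      rw [Real.norm_eq_abs, abs_of_nonneg (mul_nonneg ha hb)]
      have hb2 : (1 - y) ^ (-(α + 1)) ≤ (2:ℝ) ^ (α+1) := by
        have h12 : ((2:ℝ)⁻¹) ^ (-(α+1)) = (2:ℝ)^(α+1) := by
          rw [Real.inv_rpow (by norm_num), Real.rpow_neg (by norm_num), inv_inv]
        calc (1 - y) ^ (-(α + 1)) ≤ ((2:ℝ)⁻¹) ^ (-(α+1)) := by
              apply Real.rpow_le_rpow_of_nonpos (by norm_num) (by linarith) (by linarith)
          _ = _ := h12
      calc (y ^ (-α) - 1) * (1 - y) ^ (-(α + 1)) ≤ y ^ (-α) * (2:ℝ)^(α+1) := by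
            apply mul_le_mul (by linarith) hb2 hb (Real.rpow_nonneg hy0.le _)
        _ = (2:ℝ)^(α+1) * y ^ (-α) := by ring
  have h2 : IntervalIntegrable (fun y : ℝ => (y ^ (-α) - 1) * (1 - y) ^ (-(α + 1)))
      volume (1/2) 1 := by
    apply IntervalIntegrable.mono_fun'
      (g := fun y : ℝ => (2:ℝ) ^ α * (1 - y) ^ (-α))
    · have := (intervalIntegrable_rpow' (r := -α) (a := 1 - (1/2)) (b := 1 - 1)
        (by linarith)).comp_sub_left 1
      norm_num at this
      exact this.const_mul _
    · exact hmeas.aestronglyMeasurable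
    · rw [uIoc_of_le (by norm_num : (1:ℝ)/2 ≤ 1)]
      filter_upwards [ae_restrict_mem measurableSet_Ioc] with y hy
      obtain ⟨hy2, hy1⟩ := hy
      have hy0 : (0:ℝ) < y := by linarith
      rcases eq_or_lt_of_le hy1 with h | h
      · simp [h, Real.zero_rpow (by linarith : -(α+1) ≠ 0),
          Real.zero_rpow (by linarith : -α ≠ 0)]
      · have hy1' : 1 - y > 0 := by linarith
        have ha : (0:ℝ) ≤ y ^ (-α) - 1 := by
          have := Real.one_le_rpow_of_pos_of_le_one_of_nonpos hy0 hy1 (by linarith : -α ≤ 0)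
          linarith
        have hb : (0:ℝ) ≤ (1 - y) ^ (-(α + 1)) := Real.rpow_nonneg (by linarith) _
        rw [Real.norm_eq_abs, abs_of_nonneg (mul_nonneg ha hb)]
        have key : y ^ (-α) - 1 ≤ (2:ℝ)^α * (1 - y) := by
          have e1 : y ^ (-α) - 1 = y ^ (-α) * (1 - y ^ α) := by
            have : y ^ (-α) * y ^ α = 1 := by
              rw [← Real.rpow_add hy0]; simp
            rw [mul_sub, this, mul_one]
          have e2 : y ^ α ≥ y := by
            calc y = y ^ (1:ℝ) := (Real.rpow_one y).symm
              _ ≤ y ^ α := Real.rpow_le_rpow_of_exponent_ge hy0 hy1 (by linarith)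
          have e3 : y ^ (-α) ≤ (2:ℝ)^α := by
            have h12 : ((2:ℝ)⁻¹) ^ (-α) = (2:ℝ)^α := by
              rw [Real.inv_rpow (by norm_num), Real.rpow_neg (by norm_num), inv_inv]
            calc y ^ (-α) ≤ ((2:ℝ)⁻¹) ^ (-α) :=
                Real.rpow_le_rpow_of_nonpos (by norm_num) (by linarith) (by linarith)
              _ = _ := h12
          have e4 : y ^ α ≤ 1 := Real.rpow_le_one hy0.le hy1 hα0.le
          calc y ^ (-α) - 1 = y ^ (-α) * (1 - y ^ α) := e1
            _ ≤ (2:ℝ)^α * (1 - y) := by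
                apply mul_le_mul e3 (by linarith) (by linarith) (by positivity)
        calc (y ^ (-α) - 1) * (1 - y) ^ (-(α + 1))
            ≤ ((2:ℝ)^α * (1 - y)) * (1 - y) ^ (-(α + 1)) := by
              apply mul_le_mul_of_nonneg_right key hb
          _ = (2:ℝ)^α * (1 - y) ^ (-α) := by
              rw [mul_assoc]
              congr 1
              calc (1 - y) * (1 - y) ^ (-(α + 1))
                  = (1 - y) ^ (1:ℝ) * (1 - y) ^ (-(α+1)) := by rw [Real.rpow_one]
                _ = (1 - y) ^ (1 + -(α+1)) := (Real.rpow_add hy1' _ _).symm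
                _ = (1 - y) ^ (-α) := by ring_nf
  exact h1.trans h2

lemma Ca_nonneg {α : ℝ} (hα0 : 0 < α) : 0 ≤ Cα α := by
  apply intervalIntegral.integral_nonneg_of_ae_restrict (by norm_num)
  have h0 : ∀ᵐ y : ℝ ∂(volume.restrict (Icc (0:ℝ) 1)), y ≠ 0 := by
    refine (ae_restrict_of_ae ?_)
    rw [ae_iff]
    simp only [not_not]
    have : {y : ℝ | y = 0} = {0} := by ext; simp
    rw [this]
    exact Real.volume_singleton
  filter_upwards [ae_restrict_mem measurableSet_Icc, h0] with y hy hy0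
  obtain ⟨hy1, hy2⟩ := hy
  have hy0' : 0 < y := lt_of_le_of_ne hy1 (Ne.symm hy0)
  have ha : (0:ℝ) ≤ y ^ (-α) - 1 := by
    have := Real.one_le_rpow_of_pos_of_le_one_of_nonpos hy0' hy2 (by linarith : -α ≤ 0)
    linarith
  exact mul_nonneg ha (Real.rpow_nonneg (by linarith) _)

lemma Isub {α s : ℝ} (hα0 : 0 < α) (hs : 0 < s) :
    (∫ r in (0:ℝ)..s, (r ^ (-α) - s ^ (-α)) * (s - r) ^ (-(α + 1)))
      = Cα α * s ^ (-(2 * α)) := by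
  have key : ∀ y ∈ uIcc (0:ℝ) 1,
      ((s * y) ^ (-α) - s ^ (-α)) * (s - s * y) ^ (-(α + 1))
        = s ^ (-(2 * α + 1)) * ((y ^ (-α) - 1) * (1 - y) ^ (-(α + 1))) := by
    intro y hy
    rw [uIcc_of_le (by norm_num)] at hy
    obtain ⟨hy0, hy1⟩ := hy
    have e1 : (s * y) ^ (-α) = s ^ (-α) * y ^ (-α) := Real.mul_rpow hs.le hy0
    have e2 : (s - s * y) ^ (-(α + 1)) = s ^ (-(α+1)) * (1 - y) ^ (-(α + 1)) := by
      rw [show s - s * y = s * (1 - y) by ring, Real.mul_rpow hs.le (by linarith)]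
    rw [e1, e2]
    have e3 : s ^ (-α) * s ^ (-(α+1)) = s ^ (-(2*α+1)) := by
      rw [← Real.rpow_add hs]; ring_nf
    calc (s ^ (-α) * y ^ (-α) - s ^ (-α)) * (s ^ (-(α+1)) * (1 - y) ^ (-(α + 1)))
        = (s ^ (-α) * s ^ (-(α+1))) * ((y ^ (-α) - 1) * (1 - y) ^ (-(α + 1))) := by ring
      _ = _ := by rw [e3]
  have subst := intervalIntegral.mul_integral_comp_mul_left
    (f := fun r : ℝ => (r ^ (-α) - s ^ (-α)) * (s - r) ^ (-(α + 1))) (c := s)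
    (a := 0) (b := 1)
  simp only [mul_zero, mul_one] at subst
  rw [← subst, intervalIntegral.integral_congr key,
    intervalIntegral.integral_const_mul]
  rw [show (∫ y in (0:ℝ)..1, (y ^ (-α) - 1) * (1 - y) ^ (-(α + 1))) = Cα α from rfl]
  calc s * (s ^ (-(2*α+1)) * Cα α)
      = (s ^ (-(2*α+1)) * s ^ (1:ℝ)) * Cα α := by rw [Real.rpow_one]; ring
    _ = s ^ (-(2*α+1) + 1) * Cα α := by rw [← Real.rpow_add hs]
    _ = Cα α * s ^ (-(2*α)) := by rw [show -(2*α+1)+1 = -(2*α) by ring]; ring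

lemma mainBound (α L M : ℝ) (hα0 : 0 < α) (hα1 : α < 1 / 2) (hL : 0 < L) (hM : 0 < M)
    (h σ : ℝ → ℝ) (hmσ : Measurable σ)
    (hh : ∀ x ∈ Icc (0:ℝ) 1, |h x| ≤ L) (hσ : ∀ x ∈ Icc (0:ℝ) 1, |σ x| ≤ M)
    (v s : ℝ) (hv : 0 < v) (hvs : v < s) (hs1 : s ≤ 1) :
    |gKer α h σ s v|
      ≤ L * M * Cα α / (α * (α + 1)) * v ^ (-α) * (s - v) ^ (α + 1) := by
  have hs0 : 0 < s := hv.trans hvs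
  -- inner integral bound
  have inner : ∀ u, v ≤ u → u ≤ s →
      ‖∫ x in v..u, (x - v) ^ (α - 1) * x ^ α * σ x‖
        ≤ M * s ^ α / α * (u - v) ^ α := by
    intro u hvu hus
    have hb : IntervalIntegrable (fun x : ℝ => M * s ^ α * (x - v) ^ (α - 1))
        volume v u := (shiftRpowIntegrable (by linarith) v v u).const_mul _
    have hbound := intervalIntegral.norm_integral_le_abs_of_norm_le
      (f := fun x => (x - v) ^ (α - 1) * x ^ α * σ x)
      (g := fun x => M * s ^ α * (x - v) ^ (α - 1)) ?_ hb
    · refine hbound.trans (le_of_eq ?_)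
      rw [intervalIntegral.integral_const_mul, shiftRpowIntegral (by linarith)]
      rw [show α - 1 + 1 = α by ring, sub_self, Real.zero_rpow hα0.ne', sub_zero]
      rw [abs_of_nonneg (mul_nonneg (by positivity)
        (div_nonneg (Real.rpow_nonneg (by linarith) _) hα0.le))]
      ring
    · rw [uIoc_of_le hvu]
      filter_upwards [ae_restrict_mem measurableSet_Ioc] with x hx
      obtain ⟨hx1, hx2⟩ := hx
      have hx0 : 0 < x := hv.trans hx1
      have hσx : |σ x| ≤ M := hσ x ⟨hx0.le, by linarith⟩
      have hxa : x ^ α ≤ s ^ α := Real.rpow_le_rpow hx0.le (by linarith) hα0.le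
      have h1 : (0:ℝ) ≤ (x - v) ^ (α - 1) := Real.rpow_nonneg (by linarith) _
      calc ‖(x - v) ^ (α - 1) * x ^ α * σ x‖
          = (x - v) ^ (α - 1) * x ^ α * |σ x| := by
            rw [Real.norm_eq_abs, abs_mul, abs_mul,
              abs_of_nonneg h1, abs_of_nonneg (Real.rpow_nonneg hx0.le _)]
        _ ≤ (x - v) ^ (α - 1) * s ^ α * M := by
            apply mul_le_mul (mul_le_mul_of_nonneg_left hxa h1) hσx (abs_nonneg _)
            positivity
        _ = M * s ^ α * (x - v) ^ (α - 1) := by ring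
  -- outer integral bound
  have outer : ‖∫ u in v..s, ∫ x in v..u, (x - v) ^ (α - 1) * x ^ α * σ x‖
      ≤ M * s ^ α / α * ((s - v) ^ (α + 1) / (α + 1)) := by
    have hb : IntervalIntegrable (fun u : ℝ => M * s ^ α / α * (u - v) ^ α)
        volume v s := (shiftRpowIntegrable (by linarith) v v s).const_mul _
    have hbound := intervalIntegral.norm_integral_le_abs_of_norm_le
      (f := fun u => ∫ x in v..u, (x - v) ^ (α - 1) * x ^ α * σ x)
      (g := fun u => M * s ^ α / α * (u - v) ^ α) ?_ hb
    · refine hbound.trans (le_of_eq ?_)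
      rw [intervalIntegral.integral_const_mul, shiftRpowIntegral (by linarith)]
      rw [sub_self, Real.zero_rpow (by linarith : α + 1 ≠ 0), sub_zero]
      rw [abs_of_nonneg (mul_nonneg (by positivity)
        (div_nonneg (Real.rpow_nonneg (by linarith) _) (by linarith)))]
    · rw [uIoc_of_le hvs.le]
      filter_upwards [ae_restrict_mem measurableSet_Ioc] with u hu
      exact inner u hu.1.le hu.2
  -- assemble
  have hI := Isub hα0 hs0
  have hCa := Ca_nonneg hα0
  have habs : |gKer α h σ s v|
      = s ^ α * |h s| * v ^ (-α) * (Cα α * s ^ (-(2 * α))) *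
        |∫ u in v..s, ∫ x in v..u, (x - v) ^ (α - 1) * x ^ α * σ x| := by
    rw [gKer, hI, abs_mul, abs_mul, abs_mul, abs_mul,
      abs_of_nonneg (Real.rpow_nonneg hs0.le α),
      abs_of_nonneg (Real.rpow_nonneg hv.le (-α)),
      abs_of_nonneg (mul_nonneg hCa (Real.rpow_nonneg hs0.le _))]
  rw [habs]
  have hhs : |h s| ≤ L := hh s ⟨hs0.le, hs1⟩
  have step : s ^ α * |h s| * v ^ (-α) * (Cα α * s ^ (-(2 * α))) *
        |∫ u in v..s, ∫ x in v..u, (x - v) ^ (α - 1) * x ^ α * σ x|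
      ≤ s ^ α * L * v ^ (-α) * (Cα α * s ^ (-(2 * α))) *
        (M * s ^ α / α * ((s - v) ^ (α + 1) / (α + 1))) := by
    have h1 : (0:ℝ) ≤ s ^ α := Real.rpow_nonneg hs0.le _
    have h2 : (0:ℝ) ≤ v ^ (-α) := Real.rpow_nonneg hv.le _
    have h3 : (0:ℝ) ≤ Cα α * s ^ (-(2 * α)) :=
      mul_nonneg hCa (Real.rpow_nonneg hs0.le _)
    gcongr
    · exact Real.norm_eq_abs _ ▸ outer
  refine step.trans (le_of_eq ?_)
  have hpow : s ^ α * s ^ (-(2 * α)) * s ^ α = 1 := by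
    rw [← Real.rpow_add hs0, ← Real.rpow_add hs0,
      show α + -(2 * α) + α = 0 by ring, Real.rpow_zero]
  field_simp
  rw [show α * 2 = 2 * α by ring]
  linear_combination (Cα α * (s - v) ^ (α + 1)) * hpow


/-- For `α ∈ (0,1/2)`, `|h| ≤ L`, `|σ| ≤ M`, the constant `C_α` is finite and
`|g(s,v)| ≤ (L M C_α/(α(α+1))) v^{-α} (s-v)^{α+1}` for `0 < v < s ≤ 1`;
in particular `g` vanishes on the diagonal. -/
theorem gKer_bound
    (α L M : ℝ) (hα0 : 0 < α) (hα1 : α < 1 / 2) (hL : 0 < L) (hM : 0 < M)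
    (h σ : ℝ → ℝ) (hmh : Measurable h) (hmσ : Measurable σ)
    (hh : ∀ x ∈ Icc (0:ℝ) 1, |h x| ≤ L) (hσ : ∀ x ∈ Icc (0:ℝ) 1, |σ x| ≤ M) :
    IntervalIntegrable (fun y : ℝ => (y ^ (-α) - 1) * (1 - y) ^ (-(α + 1)))
      volume 0 1 ∧
    (∀ v s : ℝ, 0 < v → v < s → s ≤ 1 →
      |gKer α h σ s v|
        ≤ L * M * Cα α / (α * (α + 1)) * v ^ (-α) * (s - v) ^ (α + 1)) ∧
    ∀ s ∈ Ioc (0:ℝ) 1,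
      Tendsto (fun v => gKer α h σ s v) (nhdsWithin s (Iio s)) (nhds 0) := by
  refine ⟨CaIntegrable hα0 (by linarith), ?_, ?_⟩
  · intro v s hv hvs hs1
    exact mainBound α L M hα0 hα1 hL hM h σ hmσ hh hσ v s hv hvs hs1
  · intro s hs
    obtain ⟨hs0, hs1⟩ := hs
    apply squeeze_zero_norm'
      (a := fun v => L * M * Cα α / (α * (α + 1)) * v ^ (-α) * (s - v) ^ (α + 1))
    · filter_upwards [self_mem_nhdsWithin,
        (eventually_gt_nhds hs0).filter_mono nhdsWithin_le_nhds] with v hv1 hv2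
      rw [Real.norm_eq_abs]
      exact mainBound α L M hα0 hα1 hL hM h σ hmσ hh hσ v s hv2 hv1 hs1
    · have hc : ContinuousAt
          (fun v : ℝ => L * M * Cα α / (α * (α + 1)) * v ^ (-α) * (s - v) ^ (α + 1)) s := by
        apply ContinuousAt.mul
        · exact continuousAt_const.mul
            (Real.continuousAt_rpow_const s (-α) (Or.inl hs0.ne'))
        · exact ((continuous_const.sub continuous_id).continuousAt).rpow_const
            (Or.inr (by linarith))
      have := (hc.tendsto).mono_left (nhdsWithin_le_nhds (s := Iio s))
      simpa [Real.zero_rpow (by linarith : α + 1 ≠ 0)] using this
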